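/- Let A and B be nonempty closed convex sets in R^n with A compact and A ∩ B nonempty. Suppose (x^k) in A and (y^k) in B are generated by: y^{k+1} = P_B(x^k) and x^{k+1} is an inexact projection of y^{k+1} onto A relative to x^k with nonnegative forcing parameters satisfying theta_k <= theta-bar < 1/2 and 2 gamma_k + 4 lambda_k < sigma < 1 for all k (in the sense <y^{k+1} - x^{k+1}, z - x^{k+1}> <= gamma_k ||y^{k+1} - x^k||^2 + theta_k ||x^{k+1} - y^{k+1}||^2 + lambda_k ||x^{k+1} - x^k||^2 for all z in A). Then (x^k) and (y^k) both converge to a common point in A ∩ B. -/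

import Mathlib

open Filter Topology RealInnerProductSpace

set_option maxHeartbeats 1000000

private lemma key_real (uu vv ww uv uw vw g t l s : ℝ)
    (hg : 0 ≤ g) (ht : t < 1/2) (hl : 0 ≤ l)
    (hsb : 2*g + 4*l < s) (hs : s < 1)
    (hD : 0 ≤ uu + vv - 2*uv) (hE : 0 ≤ vv + ww - 2*vw)
    (h1 : 0 ≤ uv - vv)
    (h2 : ww - vw ≤ g*(uu+vv-2*uv) + t*(vv+ww-2*vw) + l*(uu+ww-2*uw))
    (h3 : uv - uw - vw + ww ≤ g*(uu+vv-2*uv) + t*(vv+ww-2*vw) + l*(uu+ww-2*uw)) :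
    ww ≤ uu - (1-s)*(uu+vv-2*uv) := by
  have h2l : 0 < 1 - 2*l := by linarith
  have key : 0 ≤ (1-2*l) * ((uu - (1-s)*(uu+vv-2*uv)) - ww) := by
    nlinarith [mul_nonneg (le_of_lt h2l) h1,
      mul_nonneg (le_of_lt h2l)
        (by linarith : 0 ≤ g*(uu+vv-2*uv) + t*(vv+ww-2*vw) + l*(uu+ww-2*uw) - (ww - vw)),
      mul_nonneg hl
        (by linarith : 0 ≤ g*(uu+vv-2*uv) + t*(vv+ww-2*vw) + l*(uu+ww-2*uw) - (uv - uw - vw + ww)),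
      mul_nonneg (by linarith : (0:ℝ) ≤ s - 2*g - 4*l) hD,
      mul_nonneg (mul_nonneg hl (by linarith : (0:ℝ) ≤ 1 - s)) hD,
      mul_nonneg (by linarith : (0:ℝ) ≤ 1 - 2*t) hE]
  by_contra h
  push_neg at h
  nlinarith [mul_pos h2l (by linarith : (0:ℝ) < ww - (uu - (1-s)*(uu+vv-2*uv)))]

private lemma key_geom {H : Type*} [NormedAddCommGroup H] [InnerProductSpace ℝ H]
    (a b c p : H) (g t l s : ℝ)
    (hg : 0 ≤ g) (ht : t < 1/2) (hl : 0 ≤ l)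
    (hsb : 2*g + 4*l < s) (hs : s < 1)
    (hi : ⟪a - c, p - c⟫ ≤ 0)
    (h2 : ⟪c - b, p - b⟫ ≤ g*‖c - a‖^2 + t*‖b - c‖^2 + l*‖b - a‖^2)
    (h3 : ⟪c - b, a - b⟫ ≤ g*‖c - a‖^2 + t*‖b - c‖^2 + l*‖b - a‖^2) :
    ‖b - p‖^2 ≤ ‖a - p‖^2 - (1-s)*‖c - a‖^2 := by
  have eD : ‖c - a‖^2 = ‖a - p‖^2 + ‖c - p‖^2 - 2*⟪a - p, c - p⟫ := by
    rw [show c - a = (c - p) - (a - p) by abel, norm_sub_sq_real,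
      real_inner_comm (c - p) (a - p)]
    ring
  have eE : ‖b - c‖^2 = ‖c - p‖^2 + ‖b - p‖^2 - 2*⟪c - p, b - p⟫ := by
    rw [show b - c = (b - p) - (c - p) by abel, norm_sub_sq_real,
      real_inner_comm (b - p) (c - p)]
    ring
  have eF : ‖b - a‖^2 = ‖a - p‖^2 + ‖b - p‖^2 - 2*⟪a - p, b - p⟫ := by
    rw [show b - a = (b - p) - (a - p) by abel, norm_sub_sq_real,
      real_inner_comm (b - p) (a - p)]
    ring
  have ei : ⟪a - c, p - c⟫ = ‖c - p‖^2 - ⟪a - p, c - p⟫ := by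
    rw [show a - c = (a - p) - (c - p) by abel, show p - c = -(c - p) by abel,
      inner_neg_right, inner_sub_left, real_inner_self_eq_norm_sq]
    ring
  have eii : ⟪c - b, p - b⟫ = ‖b - p‖^2 - ⟪c - p, b - p⟫ := by
    rw [show c - b = (c - p) - (b - p) by abel, show p - b = -(b - p) by abel,
      inner_neg_right, inner_sub_left, real_inner_self_eq_norm_sq]
    ring
  have eiii : ⟪c - b, a - b⟫
      = ⟪a - p, c - p⟫ - ⟪a - p, b - p⟫ - ⟪c - p, b - p⟫ + ‖b - p‖^2 := by
    rw [show c - b = (c - p) - (b - p) by abel, show a - b = (a - p) - (b - p) by abel,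
      inner_sub_left (c - p) (b - p) ((a - p) - (b - p)),
      inner_sub_right (𝕜 := ℝ) (c - p) (a - p) (b - p),
      inner_sub_right (𝕜 := ℝ) (b - p) (a - p) (b - p),
      real_inner_self_eq_norm_sq,
      real_inner_comm (c - p) (a - p), real_inner_comm (b - p) (a - p)]
    ring
  rw [ei] at hi
  rw [eii, eD, eE, eF] at h2
  rw [eiii, eD, eE, eF] at h3
  rw [eD]
  exact key_real _ _ _ _ _ _ g t l s hg ht hl hsb hs
    (by rw [← eD]; positivity) (by rw [← eE]; positivity)
    (by linarith) h2 h3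

theorem stmt_14 {n : ℕ} (A B : Set (EuclideanSpace ℝ (Fin n)))
    (hAne : A.Nonempty) (hAcp : IsCompact A) (hAcv : Convex ℝ A) (hAcl : IsClosed A)
    (hBne : B.Nonempty) (hBcl : IsClosed B) (hBcv : Convex ℝ B)
    (hAB : (A ∩ B).Nonempty)
    (PB : EuclideanSpace ℝ (Fin n) → EuclideanSpace ℝ (Fin n))
    (hPB : ∀ u, PB u ∈ B ∧ ∀ z ∈ B, ‖u - PB u‖ ≤ ‖u - z‖)
    (γ θ lam : ℕ → ℝ) (hγ : ∀ k, 0 ≤ γ k) (hθ : ∀ k, 0 ≤ θ k) (hlam : ∀ k, 0 ≤ lam k)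
    (θbar σ : ℝ) (hθbar : θbar < 1 / 2) (hσ : σ < 1)
    (hθb : ∀ k, θ k ≤ θbar) (hσb : ∀ k, 2 * γ k + 4 * lam k < σ)
    (x y : ℕ → EuclideanSpace ℝ (Fin n))
    (hx : ∀ k, x k ∈ A) (hy : ∀ k, y k ∈ B)
    (hyk : ∀ k, y (k + 1) = PB (x k))
    (hxk : ∀ k, ∀ z ∈ A, @inner ℝ _ _ (y (k + 1) - x (k + 1)) (z - x (k + 1)) ≤
      γ k * ‖y (k + 1) - x k‖ ^ 2 + θ k * ‖x (k + 1) - y (k + 1)‖ ^ 2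
        + lam k * ‖x (k + 1) - x k‖ ^ 2) :
    ∃ p ∈ A ∩ B, Filter.Tendsto x Filter.atTop (nhds p) ∧
      Filter.Tendsto y Filter.atTop (nhds p) := by
  classical
  obtain ⟨p₀, hp₀⟩ := hAB
  -- variational inequality for the projection onto B
  have hproj : ∀ u, ∀ z ∈ B, ⟪u - PB u, z - PB u⟫ ≤ 0 := by
    intro u
    haveI : Nonempty ↑B := ⟨⟨PB u, (hPB u).1⟩⟩
    have h1 : ‖u - PB u‖ = ⨅ w : B, ‖u - w‖ := by
      apply le_antisymm
      · exact le_ciInf fun w => (hPB u).2 (w : EuclideanSpace ℝ (Fin n)) w.2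
      · exact ciInf_le ⟨0, by rintro r ⟨w, rfl⟩; exact norm_nonneg _⟩
          (⟨PB u, (hPB u).1⟩ : B)
    exact (norm_eq_iInf_iff_real_inner_le_zero hBcv (hPB u).1).mp h1
  -- the key Fejér-type inequality
  have key : ∀ p, p ∈ A → p ∈ B → ∀ k,
      ‖x (k+1) - p‖^2 ≤ ‖x k - p‖^2 - (1-σ)*‖y (k+1) - x k‖^2 := by
    intro p hpA hpB k
    have hi : ⟪x k - y (k+1), p - y (k+1)⟫ ≤ 0 := by
      rw [hyk k]; exact hproj (x k) p hpB
    exact key_geom (x k) (x (k+1)) (y (k+1)) p (γ k) (θ k) (lam k) σ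
      (hγ k) (lt_of_le_of_lt (hθb k) hθbar) (hlam k) (hσb k) hσ hi
      (hxk k p hpA) (hxk k (x k) (hx k))
  have hσ0 : 0 < 1 - σ := by linarith
  set D : ℕ → ℝ := fun k => ‖y (k + 1) - x k‖ ^ 2 with hDdef
  have hDnn : ∀ k, 0 ≤ D k := fun k => sq_nonneg _
  have htel : ∀ N, (1-σ) * ∑ k ∈ Finset.range N, D k
      ≤ ‖x 0 - p₀‖^2 - ‖x N - p₀‖^2 := by
    intro N
    induction N with
    | zero => simp
    | succ N ih =>
      rw [Finset.sum_range_succ, mul_add]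
      have hk := key p₀ hp₀.1 hp₀.2 N
      have hDN : D N = ‖y (N + 1) - x N‖ ^ 2 := rfl
      rw [← hDN] at hk
      linarith
  have hsummable : Summable D := by
    apply summable_of_sum_range_le (c := ‖x 0 - p₀‖^2 / (1-σ)) hDnn
    intro N
    rw [le_div_iff₀ hσ0]
    have := htel N
    have h0 : 0 ≤ ‖x N - p₀‖^2 := sq_nonneg _
    nlinarith
  have hD0 : Tendsto D atTop (𝓝 0) := hsummable.tendsto_atTop_zero
  have hdiffnorm : Tendsto (fun k => ‖y (k+1) - x k‖) atTop (𝓝 0) := by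
    have he : (fun k => ‖y (k+1) - x k‖) = fun k => Real.sqrt (D k) :=
      funext fun k => (Real.sqrt_sq (norm_nonneg _)).symm
    rw [he]
    have := (Real.continuous_sqrt.tendsto 0).comp hD0
    simpa [Function.comp_def] using this
  have hdiff : Tendsto (fun k => y (k+1) - x k) atTop (𝓝 0) :=
    tendsto_zero_iff_norm_tendsto_zero.mpr hdiffnorm
  obtain ⟨q, hqA, φ, hφ, hxφ⟩ := hAcp.tendsto_subseq hx
  have hyφ : Tendsto (fun j => y (φ j + 1)) atTop (𝓝 q) := by
    have h1 : Tendsto (fun j => x (φ j) + (y (φ j + 1) - x (φ j))) atTop (𝓝 (q + 0)) :=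
      hxφ.add (hdiff.comp hφ.tendsto_atTop)
    have he : (fun j => x (φ j) + (y (φ j + 1) - x (φ j))) = fun j => y (φ j + 1) :=
      funext fun j => by abel
    rw [he] at h1
    simpa using h1
  have hqB : q ∈ B := hBcl.mem_of_tendsto hyφ (Filter.Eventually.of_forall fun j => hy _)
  have hmono : ∀ k, ‖x (k+1) - q‖ ≤ ‖x k - q‖ := by
    intro k
    have h := key q hqA hqB k
    have h2 : ‖x (k+1) - q‖^2 ≤ ‖x k - q‖^2 := by
      nlinarith [mul_nonneg hσ0.le (sq_nonneg ‖y (k+1) - x k‖)]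
    nlinarith [norm_nonneg (x (k+1) - q), norm_nonneg (x k - q)]
  have hanti : Antitone (fun k => ‖x k - q‖) := antitone_nat_of_succ_le hmono
  have hbdd : BddBelow (Set.range fun k => ‖x k - q‖) :=
    ⟨0, by rintro r ⟨k, rfl⟩; exact norm_nonneg _⟩
  have hlim : Tendsto (fun k => ‖x k - q‖) atTop (𝓝 (⨅ k, ‖x k - q‖)) :=
    tendsto_atTop_ciInf hanti hbdd
  have hsub0 : Tendsto (fun j => ‖x (φ j) - q‖) atTop (𝓝 0) := by
    have h1 : Tendsto (fun j => x (φ j) - q) atTop (𝓝 (q - q)) :=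
      hxφ.sub tendsto_const_nhds
    rw [sub_self] at h1
    simpa using h1.norm
  have hsub : Tendsto (fun j => ‖x (φ j) - q‖) atTop (𝓝 (⨅ k, ‖x k - q‖)) :=
    hlim.comp hφ.tendsto_atTop
  have hinf0 : (⨅ k, ‖x k - q‖) = 0 := tendsto_nhds_unique hsub hsub0
  rw [hinf0] at hlim
  have hxq : Tendsto x atTop (𝓝 q) := by
    rw [tendsto_iff_dist_tendsto_zero]
    simpa [dist_eq_norm] using hlim
  have hyq1 : Tendsto (fun k => y (k+1)) atTop (𝓝 q) := by
    have h1 : Tendsto (fun k => x k + (y (k+1) - x k)) atTop (𝓝 (q + 0)) :=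
      hxq.add hdiff
    have he : (fun k => x k + (y (k+1) - x k)) = fun k => y (k+1) :=
      funext fun k => by abel
    rw [he] at h1
    simpa using h1
  have hyq : Tendsto y atTop (𝓝 q) := (tendsto_add_atTop_iff_nat 1).mp hyq1
  exact ⟨q, ⟨hqA, hqB⟩, hxq, hyq⟩
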